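/- arXiv:1306.0881 — 3 statements merged into one kernel-verified Lean document; each statement's English description precedes it below -/
import Mathlib

section
/- Fix $m \le n$, real numbers $\theta_{ij}$ for $i \in \{1,\dots,m\}$, $j \in \{m+1,\dots,n\}$, a symmetric real $m \times m$ matrix $(q_{ij})$, and $\lambda \in \mathbb{R}$. Define the $n \times n$ complex matrix $\mathcal{A}(k)$ for $k > 0$ by: $\mathcal{A}_{ij} = ik\,\delta_{ij} - \lambda q_{ij}$ for $i,j \le m$; $\mathcal{A}_{ij} = ik\,\theta_{ij}$ for $i \le m < j$; $\mathcal{A}_{ij} = -\theta_{ji}$ for $j \le m < i$; $\mathcal{A}_{ij} = \delta_{ij}$ for $i,j > m$. Then $\det \mathcal{A}(k) \ne 0$ for every $k > 0$. -/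
def eAux (m n : ℕ) (hmn : m ≤ n) : Fin m ⊕ Fin (n - m) ≃ Fin n :=
  finSumFinEquiv.trans (finCongr (Nat.add_sub_cancel' hmn))

lemma eAux_inl (m n : ℕ) (hmn : m ≤ n) (i : Fin m) : ((eAux m n hmn (Sum.inl i)) : ℕ) = i := by
  simp [eAux, finSumFinEquiv]

lemma eAux_inr (m n : ℕ) (hmn : m ≤ n) (j : Fin (n-m)) :
    ((eAux m n hmn (Sum.inr j)) : ℕ) = m + j := by
  simp [eAux, finSumFinEquiv]

open Matrix in
open scoped ComplexOrder in
lemma keyDet {m p : ℕ} (Θc : Matrix (Fin m) (Fin p) ℂ)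
    (qc : Matrix (Fin m) (Fin m) ℂ) (hqc : qc.IsHermitian) (lam k : ℝ) (hk : 0 < k) :
    ((Complex.I * k) • (1 + Θc * Θcᴴ) - (lam : ℂ) • qc).det ≠ 0 := by
  intro h
  obtain ⟨v, hv, hMv⟩ := Matrix.exists_mulVec_eq_zero_iff.mpr h
  set N : Matrix (Fin m) (Fin m) ℂ := 1 + Θc * Θcᴴ with hNdef
  have hN : N.PosDef :=
    Matrix.PosDef.one.add_posSemidef (Matrix.posSemidef_self_mul_conjTranspose Θc)
  set α := dotProduct (star v) (N *ᵥ v) with hαdef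
  set β := dotProduct (star v) (qc *ᵥ v) with hβdef
  have hα : 0 < α := hN.dotProduct_mulVec_pos hv
  have hαre : 0 < α.re := (Complex.lt_def.mp hα).1
  have hαim : α.im = 0 := ((Complex.lt_def.mp hα).2).symm
  have hstar : star β = β := by
    calc star β = star (star (star (qc *ᵥ v) ⬝ᵥ v)) := by rw [hβdef, Matrix.star_dotProduct]
      _ = star (qc *ᵥ v) ⬝ᵥ v := star_star _
      _ = (star v ᵥ* qcᴴ) ⬝ᵥ v := by rw [Matrix.star_mulVec]
      _ = star v ⬝ᵥ (qcᴴ *ᵥ v) := (Matrix.dotProduct_mulVec _ _ _).symm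
      _ = β := by rw [hqc.eq, hβdef]
  have hβim : β.im = 0 := by
    have h3 := congrArg Complex.im hstar
    rw [Complex.star_def, Complex.conj_im] at h3; linarith
  have heq : (Complex.I * k) * α - (lam : ℂ) * β = 0 := by
    have h0 : dotProduct (star v) ((((Complex.I * k) • N - (lam : ℂ) • qc)) *ᵥ v) = 0 := by
      rw [hMv, dotProduct_zero]
    rwa [Matrix.sub_mulVec, Matrix.smul_mulVec, Matrix.smul_mulVec,
      dotProduct_sub, dotProduct_smul, dotProduct_smul,
      smul_eq_mul, smul_eq_mul] at h0
  have h2 := congrArg Complex.im heq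
  simp [Complex.sub_im, Complex.mul_im, Complex.mul_re, hαim, hβim] at h2
  rcases h2 with h4 | h4
  · exact absurd h4 hk.ne'
  · exact absurd h4 hαre.ne'




/-- The coefficient matrix `𝒜(k)` of the linear system determining the on-shell
scattering amplitudes of the limit operator on the star graph:
`𝒜ᵢⱼ = ik δᵢⱼ - λ qᵢⱼ` for `i,j ≤ m`; `𝒜ᵢⱼ = ik θᵢⱼ` for `i ≤ m < j`;
`𝒜ᵢⱼ = -θⱼᵢ` for `j ≤ m < i`; `𝒜ᵢⱼ = δᵢⱼ` for `i,j > m`. -/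
def scatA (m n : ℕ) (θ : Fin m → Fin n → ℝ) (q : Matrix (Fin m) (Fin m) ℝ)
    (lam k : ℝ) : Matrix (Fin n) (Fin n) ℂ :=
  Matrix.of fun i j =>
    if hi : (i : ℕ) < m then
      if hj : (j : ℕ) < m then
        Complex.I * k * (if i = j then 1 else 0) - (lam : ℂ) * (q ⟨i, hi⟩ ⟨j, hj⟩ : ℝ)
      else Complex.I * k * (θ ⟨i, hi⟩ j : ℝ)
    else
      if hj : (j : ℕ) < m then -((θ ⟨j, hj⟩ i : ℝ) : ℂ)
      else if i = j then 1 else 0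

lemma blockEq (m n : ℕ) (hmn : m ≤ n) (θ : Fin m → Fin n → ℝ)
    (q : Matrix (Fin m) (Fin m) ℝ) (lam k : ℝ) :
    (scatA m n θ q lam k).submatrix (eAux m n hmn) (eAux m n hmn) =
      Matrix.fromBlocks
        (Matrix.of fun i j => Complex.I * k * (if i = j then 1 else 0) - (lam : ℂ) * (q i j : ℝ))
        (Matrix.of fun i j => Complex.I * k * ((θ i (eAux m n hmn (Sum.inr j)) : ℝ) : ℂ))
        (Matrix.of fun i j => -((θ j (eAux m n hmn (Sum.inr i)) : ℝ) : ℂ))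
        1 := by
  ext i j
  have hlt : ∀ i : Fin m, ((eAux m n hmn (Sum.inl i)) : ℕ) < m := fun i => by
    rw [eAux_inl]; exact i.isLt
  have hge : ∀ j : Fin (n-m), ¬ ((eAux m n hmn (Sum.inr j)) : ℕ) < m := fun j => by
    rw [eAux_inr]; omega
  have hsub : ∀ (i : Fin m) (h : ((eAux m n hmn (Sum.inl i)) : ℕ) < m),
      (⟨((eAux m n hmn (Sum.inl i)) : ℕ), h⟩ : Fin m) = i := fun i h => by
    ext; exact eAux_inl m n hmn i
  cases i with
  | inl i =>
    cases j with
    | inl j =>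
      simp only [Matrix.submatrix_apply, scatA, Matrix.of_apply, dif_pos (hlt i), dif_pos (hlt j),
        Matrix.fromBlocks_apply₁₁, hsub, (eAux m n hmn).injective.eq_iff, Sum.inl.injEq]
    | inr j =>
      simp only [Matrix.submatrix_apply, scatA, Matrix.of_apply, dif_pos (hlt i), dif_neg (hge j),
        Matrix.fromBlocks_apply₁₂, hsub]
  | inr i =>
    cases j with
    | inl j =>
      simp only [Matrix.submatrix_apply, scatA, Matrix.of_apply, dif_neg (hge i), dif_pos (hlt j),
        Matrix.fromBlocks_apply₂₁, hsub]
    | inr j =>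
      simp only [Matrix.submatrix_apply, scatA, Matrix.of_apply, dif_neg (hge i), dif_neg (hge j),
        Matrix.fromBlocks_apply₂₂, (eAux m n hmn).injective.eq_iff, Sum.inr.injEq,
        Matrix.one_apply]

/-- `det 𝒜(k) ≠ 0` for every `k > 0`. -/
theorem stmt_10 (m n : ℕ) (hmn : m ≤ n) (θ : Fin m → Fin n → ℝ)
    (q : Matrix (Fin m) (Fin m) ℝ) (hq : q.IsSymm) (lam : ℝ)
    (k : ℝ) (hk : 0 < k) :
    (scatA m n θ q lam k).det ≠ 0 := by
  rw [← Matrix.det_submatrix_equiv_self (eAux m n hmn), blockEq m n hmn θ q lam k,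
    Matrix.det_fromBlocks_one₂₂]
  set Θc : Matrix (Fin m) (Fin (n-m)) ℂ :=
    Matrix.of fun i j => ((θ i (eAux m n hmn (Sum.inr j)) : ℝ) : ℂ) with hΘ
  set qc : Matrix (Fin m) (Fin m) ℂ := q.map (fun x => (x : ℂ)) with hqcdef
  have hqc : qc.IsHermitian := by
    ext i j
    have hsym : q j i = q i j := congrFun (congrFun hq i) j
    simp [hqcdef, Matrix.conjTranspose_apply, Matrix.map_apply, Complex.star_def,
      Complex.conj_ofReal, hsym]
  have key := keyDet Θc qc hqc lam k hk
  have hEq : (Matrix.of fun i j =>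
        Complex.I * k * (if i = j then 1 else 0) - (lam : ℂ) * (q i j : ℝ)) -
      (Matrix.of fun i j => Complex.I * k * ((θ i (eAux m n hmn (Sum.inr j)) : ℝ) : ℂ)) *
      (Matrix.of fun i j => -((θ j (eAux m n hmn (Sum.inr i)) : ℝ) : ℂ)) =
      (Complex.I * k) • (1 + Θc * Θc.conjTranspose) - (lam : ℂ) • qc := by
    ext i j
    simp only [Matrix.sub_apply, Matrix.of_apply, Matrix.mul_apply, Matrix.smul_apply,
      Matrix.add_apply, Matrix.one_apply, hΘ, hqcdef, Matrix.map_apply,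
      Matrix.conjTranspose_apply, Complex.star_def, Complex.conj_ofReal, smul_eq_mul,
      mul_neg, Finset.sum_neg_distrib, sub_neg_eq_add, mul_add, Finset.mul_sum]
    ring_nf
  rw [hEq]
  exact key
end

section
/- With the matrix $\mathcal{A}(k)$ as above and $\lambda \ne 0$, suppose additionally that the symmetric matrix $(q_{ij})_{i,j\le m}$ is invertible. For $i \le m$ let $\mathbf{a}_i(k)$ be the vector with entries $\lambda q_{ji} + ik\,\delta_{ij}$ in positions $j \le m$ and $\theta_{ij}$ in positions $j > m$, and for $i > m$ the vector with entries $ik\,\theta_{ji}$ in positions $j \le m$, $-\delta_{ij}$ in positions $j > m$. Define $T_{ij}(k) = \det\mathcal{A}_{ij}(k)/\det\mathcal{A}(k)$, where $\mathcal{A}_{ij}(k)$ is $\mathcal{A}(k)$ with $j$-th column replaced by $\mathbf{a}_i(k)$. Then $\lim_{k \to 0^+} T_{ij}(k) = -\delta_{ij}$ for all $i, j \in \{1,\dots,n\}$. -/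
open Filter Set

/-- The right-hand side vector `𝐚ᵢ(k)` of the scattering system. -/
def scatRHS (m n : ℕ) (θ : Fin m → Fin n → ℝ) (q : Matrix (Fin m) (Fin m) ℝ)
    (lam k : ℝ) (i : Fin n) : Fin n → ℂ := fun j =>
  if hi : (i : ℕ) < m then
    if hj : (j : ℕ) < m then
      (lam : ℂ) * (q ⟨j, hj⟩ ⟨i, hi⟩ : ℝ) + Complex.I * k * (if i = j then 1 else 0)
    else ((θ ⟨i, hi⟩ j : ℝ) : ℂ)
  else
    if hj : (j : ℕ) < m then Complex.I * k * (θ ⟨j, hj⟩ i : ℝ)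
    else -(if i = j then 1 else 0)

/-- The scattering amplitude `Tᵢⱼ(k) = det 𝒜ᵢⱼ(k) / det 𝒜(k)` by Cramer's rule. -/
noncomputable def scatT (m n : ℕ) (θ : Fin m → Fin n → ℝ) (q : Matrix (Fin m) (Fin m) ℝ)
    (lam k : ℝ) (i j : Fin n) : ℂ :=
  ((scatA m n θ q lam k).updateCol j (scatRHS m n θ q lam k i)).det /
    (scatA m n θ q lam k).det
section AuxScat

variable (m n : ℕ) (θ : Fin m → Fin n → ℝ) (q : Matrix (Fin m) (Fin m) ℝ) (lam : ℝ)

lemma scatA_cont : Continuous fun k => scatA m n θ q lam k := by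
  apply continuous_pi; intro i; apply continuous_pi; intro j
  simp only [scatA, Matrix.of_apply]
  split_ifs <;> fun_prop

lemma scatRHS_cont (i : Fin n) : Continuous fun k => scatRHS m n θ q lam k i := by
  apply continuous_pi; intro j
  simp only [scatRHS]
  split_ifs <;> fun_prop

lemma detA0_ne_zero (hmn : m ≤ n) (hqinv : IsUnit q.det) (hlam : lam ≠ 0) :
    (scatA m n θ q lam 0).det ≠ 0 := by
  set e : Fin m ⊕ Fin (n - m) ≃ Fin n :=
    finSumFinEquiv.trans (finCongr (Nat.add_sub_cancel' hmn)) with he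
  have h1 : ∀ p : Fin m, ((e (Sum.inl p)) : ℕ) = (p : ℕ) := by
    intro p; simp [he, finSumFinEquiv]
  have h2 : ∀ p : Fin (n - m), ((e (Sum.inr p)) : ℕ) = m + (p : ℕ) := by
    intro p; simp [he, finSumFinEquiv]
  have hsub : (scatA m n θ q lam 0).submatrix e e =
      Matrix.fromBlocks ((-(lam : ℂ)) • (q.map (Complex.ofReal))) 0
        (Matrix.of fun (p : Fin (n - m)) (r : Fin m) => -((θ r (e (Sum.inr p)) : ℝ) : ℂ)) 1 := by
    ext a b
    cases a with
    | inl a =>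
      cases b with
      | inl b =>
        have ha := h1 a; have hb := h1 b
        simp only [Matrix.submatrix_apply, scatA, Matrix.of_apply]
        rw [dif_pos (by omega : ((e (Sum.inl a)) : ℕ) < m),
            dif_pos (by omega : ((e (Sum.inl b)) : ℕ) < m)]
        have : (⟨((e (Sum.inl a)) : ℕ), by omega⟩ : Fin m) = a := Fin.ext ha
        have hb' : (⟨((e (Sum.inl b)) : ℕ), by omega⟩ : Fin m) = b := Fin.ext hb
        simp [this, hb', Matrix.fromBlocks, neg_mul]
      | inr b =>
        have ha := h1 a; have hb := h2 b
        simp only [Matrix.submatrix_apply, scatA, Matrix.of_apply]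
        rw [dif_pos (by omega : ((e (Sum.inl a)) : ℕ) < m),
            dif_neg (by omega : ¬ ((e (Sum.inr b)) : ℕ) < m)]
        simp [Matrix.fromBlocks]
    | inr a =>
      cases b with
      | inl b =>
        have ha := h2 a; have hb := h1 b
        simp only [Matrix.submatrix_apply, scatA, Matrix.of_apply]
        rw [dif_neg (by omega : ¬ ((e (Sum.inr a)) : ℕ) < m),
            dif_pos (by omega : ((e (Sum.inl b)) : ℕ) < m)]
        have hb' : (⟨((e (Sum.inl b)) : ℕ), by omega⟩ : Fin m) = b := Fin.ext hb
        simp [hb', Matrix.fromBlocks]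
      | inr b =>
        have ha := h2 a; have hb := h2 b
        simp only [Matrix.submatrix_apply, scatA, Matrix.of_apply]
        rw [dif_neg (by omega : ¬ ((e (Sum.inr a)) : ℕ) < m),
            dif_neg (by omega : ¬ ((e (Sum.inr b)) : ℕ) < m)]
        by_cases hab : a = b
        · simp [hab, Matrix.fromBlocks, Matrix.one_apply]
        · have : e (Sum.inr a) ≠ e (Sum.inr b) := by
            simp [e.apply_eq_iff_eq]; exact fun h => hab (by exact_mod_cast h)
          simp [this, hab, Matrix.fromBlocks, Matrix.one_apply]
  have hdet : (scatA m n θ q lam 0).det =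
      (-(lam : ℂ)) ^ m * ((q.det : ℝ) : ℂ) := by
    rw [← Matrix.det_submatrix_equiv_self e, hsub, Matrix.det_fromBlocks_zero₁₂,
        Matrix.det_one, mul_one, Matrix.det_smul]
    congr 1
    · simp
    · rw [← Complex.ofRealHom_eq_coe, RingHom.map_det]; rfl
  rw [hdet]
  have hq0 : q.det ≠ 0 := hqinv.ne_zero
  simp only [mul_ne_zero_iff]
  constructor
  · exact pow_ne_zero _ (by simpa using hlam)
  · exact_mod_cast hq0

lemma scatRHS_zero (hq : q.IsSymm) (i : Fin n) :
    scatRHS m n θ q lam 0 i = fun j' => -(scatA m n θ q lam 0 j' i) := by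
  funext j'
  simp only [scatRHS, scatA, Matrix.of_apply, Complex.ofReal_zero, mul_zero, zero_mul]
  by_cases hi : (i : ℕ) < m
  · by_cases hj : (j' : ℕ) < m
    · have hsym : q ⟨j', hj⟩ ⟨i, hi⟩ = q ⟨i, hi⟩ ⟨j', hj⟩ := by
        exact hq.apply _ _
      simp [hi, hj, hsym]
    · simp [hi, hj]
  · by_cases hj : (j' : ℕ) < m
    · simp [hi, hj]
    · simp only [dif_neg hi, dif_neg hj]
      by_cases hij : i = j' <;> simp [hij, eq_comm]
end AuxScat


/-- if `λ ≠ 0` and `(qᵢⱼ)` is symmetric and invertible, then the on-shell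
scattering matrix of the limit operator tends to `-I` as `k → 0⁺`:
`Tᵢⱼ(k) → -δᵢⱼ`. -/
theorem stmt_11 (m n : ℕ) (hmn : m ≤ n) (θ : Fin m → Fin n → ℝ)
    (q : Matrix (Fin m) (Fin m) ℝ) (hq : q.IsSymm) (hqinv : IsUnit q.det)
    (lam : ℝ) (hlam : lam ≠ 0) (i j : Fin n) :
    Tendsto (fun k => scatT m n θ q lam k i j) (nhdsWithin 0 (Set.Ioi (0:ℝ)))
      (nhds (if i = j then -1 else 0)) := by
  have hdet0 := detA0_ne_zero m n θ q lam hmn hqinv hlam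
  have hF : Continuous fun k =>
      ((scatA m n θ q lam k).updateCol j (scatRHS m n θ q lam k i)).det :=
    (Continuous.matrix_updateCol j (scatA_cont m n θ q lam)
      (scatRHS_cont m n θ q lam i)).matrix_det
  have hG : Continuous fun k => (scatA m n θ q lam k).det :=
    (scatA_cont m n θ q lam).matrix_det
  have hcont : ContinuousAt (fun k => scatT m n θ q lam k i j) 0 :=
    hF.continuousAt.div hG.continuousAt hdet0
  have hval : scatT m n θ q lam 0 i j = if i = j then -1 else 0 := by
    unfold scatT
    rw [scatRHS_zero m n θ q lam hq i]
    have hcol : (fun j' => -(scatA m n θ q lam 0 j' i)) =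
        (-1 : ℂ) • (fun j' => scatA m n θ q lam 0 j' i) := by
      funext j'; simp
    rw [hcol, Matrix.det_updateCol_smul]
    by_cases hij : i = j
    · subst hij
      rw [Matrix.updateCol_eq_self]
      simp [div_self hdet0, neg_div]
    · have hzero : ((scatA m n θ q lam 0).updateCol j
          (fun j' => scatA m n θ q lam 0 j' i)).det = 0 := by
        refine Matrix.det_zero_of_column_eq hij fun k' => ?_
        rw [Matrix.updateCol_apply, Matrix.updateCol_apply]
        simp [hij]
      simp [hzero, hij]
  have h := (hcont.continuousWithinAt (s := Set.Ioi (0:ℝ))).tendsto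
  rw [hval] at h
  exact h
end

section
/- Let $m < n$ and suppose for each $i \in \{1, \dots, m+1\}$ there is a nonzero function $z_i \in H^2(0, a_i)$ solving $-z_i'' + Q_i z_i = 0$ on $(0, a_i)$ with $z_i(0) = 0$ and $z_i'(a_i) = 0$ (with bounded measurable potentials $Q_i$). For $i \le m$ define the function $\psi_i$ on the star graph $\Omega$ with edges $\omega_1,\dots,\omega_n$ by $\psi_i = z_{m+1}'(0)\, z_i$ on $\omega_i$, $\psi_i = -z_i'(0)\, z_{m+1}$ on $\omega_{m+1}$, and $\psi_i = 0$ on all other edges. Then each $\psi_i$ is continuous at the central vertex (all edge values there are $0$), satisfies the Kirchhoff derivative condition $\sum_j \frac{d\psi_i}{d\omega_j}(0) = 0$ at the central vertex and Neumann conditions at the outer vertices, solves $-\psi_i'' + Q \psi_i = 0$ edgewise, and the functions $\psi_1, \dots, \psi_m$ are linearly independent. -/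
open Set

lemma ivp_zero {b : ℝ} (Q z z' z'' : ℝ → ℝ) {M : ℝ}
    (hM : ∀ x ∈ Icc 0 b, |Q x| ≤ M)
    (hz : ∀ x ∈ Icc 0 b, HasDerivAt z (z' x) x)
    (hz' : ∀ x ∈ Icc 0 b, HasDerivAt z' (z'' x) x)
    (heq : ∀ x ∈ Icc 0 b, -z'' x + Q x * z x = 0)
    (h0 : z 0 = 0) (h0' : z' 0 = 0) :
    ∀ x ∈ Icc 0 b, z x = 0 := by
  set f : ℝ → ℝ × ℝ := fun x => (z x, z' x) with hf
  set f' : ℝ → ℝ × ℝ := fun x => (z' x, z'' x) with hf'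
  have hd : ∀ x ∈ Icc 0 b, HasDerivAt f (f' x) x := fun x hx =>
    (hz x hx).prodMk (hz' x hx)
  set K : ℝ := max 1 (max M 0) with hK
  have hK1 : (1:ℝ) ≤ K := le_max_left _ _
  have hKM : M ≤ K := le_trans (le_max_left _ _) (le_max_right _ _)
  have key : ∀ x ∈ Icc 0 b, ‖f x‖ ≤ gronwallBound 0 K 0 (x - 0) := by
    apply norm_le_gronwallBound_of_norm_deriv_right_le
    · exact fun x hx => (hd x hx).continuousAt.continuousWithinAt
    · exact fun x hx => ((hd x (Ico_subset_Icc_self hx)).hasDerivWithinAt)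
    · simp [hf, h0, h0', Prod.norm_def]
    · intro x hx
      have hx' := Ico_subset_Icc_self hx
      have hz'' : z'' x = Q x * z x := by have := heq x hx'; linarith
      have hnf : ‖f x‖ = max |z x| |z' x| := by simp [hf, Prod.norm_def, Real.norm_eq_abs]
      have h1 : |z' x| ≤ K * ‖f x‖ := by
        calc |z' x| ≤ max |z x| |z' x| := le_max_right _ _
        _ = 1 * ‖f x‖ := by rw [hnf]; ring
        _ ≤ K * ‖f x‖ := by
            apply mul_le_mul_of_nonneg_right hK1
            positivity
      have h2 : |z'' x| ≤ K * ‖f x‖ := by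
        rw [hz'', abs_mul]
        calc |Q x| * |z x| ≤ K * |z x| := by
              apply mul_le_mul_of_nonneg_right (le_trans (hM x hx') hKM) (abs_nonneg _)
        _ ≤ K * ‖f x‖ := by
              apply mul_le_mul_of_nonneg_left _ (by linarith)
              rw [hnf]; exact le_max_left _ _
      have : ‖f' x‖ = max |z' x| |z'' x| := by simp [hf', Prod.norm_def, Real.norm_eq_abs]
      rw [this, add_zero]
      exact max_le h1 h2
  intro x hx
  have := key x hx
  rw [gronwallBound_ε0_δ0] at this
  have hzx : |z x| ≤ ‖f x‖ := by
    simp [hf, Prod.norm_def, Real.norm_eq_abs]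
  have := le_trans hzx this
  exact abs_nonpos_iff.mp this

/-- constructive direction of the Proposition of Section 3. If each of the
`m+1` single-edge problems `-z'' + Qz = 0`, `z(0) = 0`, `z'(aᵢ) = 0` (edges `ω₁,…,ω_{m+1}`
of the star graph `Ω`, with bounded measurable potentials) has a nontrivial solution `zᵢ`,
then the glued functions `ψᵢ := z'_{m+1}(0) zᵢ` on `ωᵢ`, `-z'ᵢ(0) z_{m+1}` on `ω_{m+1}`,
`0` elsewhere, vanish at the central vertex, satisfy the Kirchhoff condition there,
Neumann conditions at the outer vertices, solve `-ψ'' + Qψ = 0` edgewise, and are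
linearly independent. -/
theorem stmt_16 (n m : ℕ) (hm : m < n) (a : Fin n → ℝ) (ha : ∀ j, 0 < a j)
    (Q : Fin n → ℝ → ℝ)
    (hQmeas : ∀ j : Fin n, Measurable (Q j))
    (hQbdd : ∀ j : Fin n, ∃ M, ∀ x ∈ Set.Icc 0 (a j), |Q j x| ≤ M)
    (z z' z'' : Fin n → ℝ → ℝ)
    (hz : ∀ j : Fin n, (j : ℕ) ≤ m → ∀ x ∈ Set.Icc 0 (a j), HasDerivAt (z j) (z' j x) x)
    (hz' : ∀ j : Fin n, (j : ℕ) ≤ m → ∀ x ∈ Set.Icc 0 (a j), HasDerivAt (z' j) (z'' j x) x)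
    (heq : ∀ j : Fin n, (j : ℕ) ≤ m →
      ∀ x ∈ Set.Icc 0 (a j), -z'' j x + Q j x * z j x = 0)
    (h0 : ∀ j : Fin n, (j : ℕ) ≤ m → z j 0 = 0)
    (hNeu : ∀ j : Fin n, (j : ℕ) ≤ m → z' j (a j) = 0)
    (hnz : ∀ j : Fin n, (j : ℕ) ≤ m → ∃ x ∈ Set.Icc 0 (a j), z j x ≠ 0) :
    let c : Fin n := ⟨m, hm⟩
    let ψ : Fin m → Fin n → ℝ → ℝ := fun i j x =>
      if j = Fin.castLE hm.le i then z' c 0 * z j x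
      else if j = c then -(z' (Fin.castLE hm.le i) 0) * z j x
      else 0
    ∃ ψ' ψ'' : Fin m → Fin n → ℝ → ℝ,
      (∀ i j, ∀ x ∈ Set.Icc 0 (a j),
        HasDerivAt (ψ i j) (ψ' i j x) x ∧ HasDerivAt (ψ' i j) (ψ'' i j x) x) ∧
      (∀ i j, ψ i j 0 = 0) ∧
      (∀ i, (∑ j : Fin n, ψ' i j 0) = 0) ∧
      (∀ i j, ψ' i j (a j) = 0) ∧
      (∀ i j, ∀ x ∈ Set.Icc 0 (a j), -ψ'' i j x + Q j x * ψ i j x = 0) ∧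
      LinearIndependent ℝ ψ := by
  intro c ψ
  have hcm : (c : ℕ) ≤ m := le_refl m
  have hcastm : ∀ i : Fin m, ((Fin.castLE hm.le i : Fin n) : ℕ) ≤ m := fun i => i.isLt.le
  have hnecast : ∀ i : Fin m, Fin.castLE hm.le i ≠ c := by
    intro i h
    have : (i : ℕ) = m := congrArg Fin.val h
    exact absurd this (Nat.ne_of_lt i.isLt)
  -- z' c 0 ≠ 0
  have hz'c0 : z' c 0 ≠ 0 := by
    intro h
    obtain ⟨M, hM⟩ := hQbdd c
    have hall := ivp_zero (Q c) (z c) (z' c) (z'' c) hM (hz c hcm) (hz' c hcm)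
      (heq c hcm) (h0 c hcm) h
    obtain ⟨x, hx, hne⟩ := hnz c hcm
    exact hne (hall x hx)
  refine ⟨fun i j x =>
      if j = Fin.castLE hm.le i then z' c 0 * z' j x
      else if j = c then -(z' (Fin.castLE hm.le i) 0) * z' j x else 0,
    fun i j x =>
      if j = Fin.castLE hm.le i then z' c 0 * z'' j x
      else if j = c then -(z' (Fin.castLE hm.le i) 0) * z'' j x else 0,
    ?_, ?_, ?_, ?_, ?_, ?_⟩
  · intro i j x hx
    by_cases h1 : j = Fin.castLE hm.le i
    · simp only [ψ, h1, if_pos rfl]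
      exact ⟨(hz _ (hcastm i) x (h1 ▸ hx)).const_mul _,
             (hz' _ (hcastm i) x (h1 ▸ hx)).const_mul _⟩
    · by_cases h2 : j = c
      · simp only [ψ, h1, h2, if_neg (hnecast i).symm, if_neg, if_pos rfl, if_false]
        exact ⟨(hz c hcm x (h2 ▸ hx)).const_mul _, (hz' c hcm x (h2 ▸ hx)).const_mul _⟩
      · simp only [ψ, if_neg h1, if_neg h2]
        exact ⟨hasDerivAt_const _ _, hasDerivAt_const _ _⟩
  · intro i j
    by_cases h1 : j = Fin.castLE hm.le i
    · simp [ψ, h1, h0 _ (hcastm i), Ne.symm (hnecast i)]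
    · by_cases h2 : j = c
      · simp [ψ, h1, h2, h0 c hcm, Ne.symm (hnecast i)]
      · simp [ψ, h1, h2]
  · intro i
    have hsplit : ∀ j : Fin n,
        (if j = Fin.castLE hm.le i then z' c 0 * z' j 0
         else if j = c then -(z' (Fin.castLE hm.le i) 0) * z' j 0 else 0)
        = (if j = Fin.castLE hm.le i then z' c 0 * z' j 0 else 0)
          + (if j = c then -(z' (Fin.castLE hm.le i) 0) * z' j 0 else 0) := by
      intro j
      by_cases h1 : j = Fin.castLE hm.le i
      · have h2 : j ≠ c := h1 ▸ hnecast i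
        simp [h1, h2, hnecast i]
      · by_cases h2 : j = c
        · subst h2; simp [Ne.symm (hnecast i)]
        · simp [h1, h2]
    rw [Finset.sum_congr rfl (fun j _ => hsplit j), Finset.sum_add_distrib,
      Finset.sum_ite_eq' Finset.univ, Finset.sum_ite_eq' Finset.univ]
    simp only [Finset.mem_univ, if_true]
    ring
  · intro i j
    by_cases h1 : j = Fin.castLE hm.le i
    · simp [h1, hNeu _ (hcastm i), Ne.symm (hnecast i)]
    · by_cases h2 : j = c
      · simp [h1, h2, hNeu c hcm, Ne.symm (hnecast i)]
      · simp [h1, h2]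
  · intro i j x hx
    by_cases h1 : j = Fin.castLE hm.le i
    · simp only [ψ, if_pos h1]
      have := heq j (h1 ▸ hcastm i) x hx
      linear_combination (z' c 0) * this
    · by_cases h2 : j = c
      · simp only [ψ, if_neg h1, if_pos h2]
        have := heq j (h2 ▸ hcm) x hx
        linear_combination (-(z' (Fin.castLE hm.le i) 0)) * this
      · simp only [ψ, if_neg h1, if_neg h2, mul_zero, neg_zero, add_zero]
  · rw [Fintype.linearIndependent_iff]
    intro g hg i
    obtain ⟨x, hx, hne⟩ := hnz (Fin.castLE hm.le i) (hcastm i)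
    have hval : ∀ i' : Fin m, ψ i' (Fin.castLE hm.le i) x
        = if i' = i then z' c 0 * z (Fin.castLE hm.le i) x else 0 := by
      intro i'
      by_cases h : i' = i
      · subst h; simp [ψ]
      · have hne2 : Fin.castLE hm.le i ≠ Fin.castLE hm.le i' :=
          fun hh => h (Fin.castLE_injective hm.le hh).symm
        simp [ψ, hne2, hnecast i, h]
    have hthis := congrFun (congrFun hg (Fin.castLE hm.le i)) x
    simp only [Finset.sum_apply, Pi.smul_apply, smul_eq_mul, Pi.zero_apply] at hthis
    simp only [hval, mul_ite, mul_zero] at hthis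
    rw [Finset.sum_ite_eq' Finset.univ i
      (fun i' => g i' * (z' c 0 * z (Fin.castLE hm.le i) x)),
      if_pos (Finset.mem_univ _)] at hthis
    rcases mul_eq_zero.mp hthis with h | h
    · exact h
    · exact absurd (mul_eq_zero.mp h) (by push_neg; exact ⟨hz'c0, hne⟩)
end
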